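/- Let Z = P·X·Q·Y where P, Q are independent Bernoulli random variables taking value 1 with probability s/d and 0 otherwise, and X, Y are independent Gaussian N(0, 1/s) random variables, all mutually independent, with s = c|λ| for some c > 1. Then E[exp(λZ)] ≤ exp(c³λ²/(d²√(c² - 1))). -/

import Mathlib

open MeasureTheory ProbabilityTheory Real
open scoped NNReal ENNReal

lemma gauss_lin {v : ℝ≥0} (hv : v ≠ 0) (A : ℝ) :
    ∫⁻ y, ENNReal.ofReal (Real.exp (A * y)) ∂(gaussianReal 0 v)
      = ENNReal.ofReal (Real.exp (A ^ 2 * v / 2)) := by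
  have hv' : (v : ℝ) ≠ 0 := by exact_mod_cast hv
  rw [gaussianReal_of_var_ne_zero _ hv,
    lintegral_withDensity_eq_lintegral_mul _ (measurable_gaussianPDF 0 v)
      (by fun_prop : Measurable fun y => ENNReal.ofReal (Real.exp (A * y)))]
  have hpt : ∀ y, (gaussianPDF 0 v * fun y => ENNReal.ofReal (Real.exp (A * y))) y
      = ENNReal.ofReal (Real.exp (A ^ 2 * v / 2) * gaussianPDFReal (A * v) v y) := by
    intro y
    simp only [Pi.mul_apply, gaussianPDF]
    rw [← ENNReal.ofReal_mul (gaussianPDFReal_nonneg _ _ _)]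
    congr 1
    unfold gaussianPDFReal
    have hexp : Real.exp (-(y - 0) ^ 2 / (2 * v)) * Real.exp (A * y)
        = Real.exp (A ^ 2 * v / 2) * Real.exp (-(y - A * v) ^ 2 / (2 * v)) := by
      rw [← Real.exp_add, ← Real.exp_add]
      congr 1
      field_simp
      ring
    calc (√(2 * π * v))⁻¹ * rexp (-(y - 0) ^ 2 / (2 * ↑v)) * rexp (A * y)
        = (√(2 * π * v))⁻¹ * (rexp (-(y - 0) ^ 2 / (2 * ↑v)) * rexp (A * y)) := by ring
      _ = (√(2 * π * v))⁻¹ * (rexp (A ^ 2 * v / 2) * rexp (-(y - A * v) ^ 2 / (2 * v))) := by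
          rw [hexp]
      _ = rexp (A ^ 2 * ↑v / 2) * ((√(2 * π * ↑v))⁻¹ * rexp (-(y - A * ↑v) ^ 2 / (2 * ↑v))) := by
          ring
  rw [lintegral_congr hpt]
  simp_rw [ENNReal.ofReal_mul (le_of_lt (Real.exp_pos (A ^ 2 * v / 2)))]
  rw [lintegral_const_mul _ ((measurable_gaussianPDFReal _ _).ennreal_ofReal),
    lintegral_gaussianPDFReal_eq_one (A * v) hv, mul_one]

open MeasureTheory ProbabilityTheory Real
open scoped NNReal ENNReal

lemma gauss_sq {v : ℝ≥0} (hv : v ≠ 0) {t : ℝ} (ht : 2 * t * v < 1) :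
    ∫⁻ x, ENNReal.ofReal (Real.exp (t * x ^ 2)) ∂(gaussianReal 0 v)
      = ENNReal.ofReal ((Real.sqrt (1 - 2 * t * v))⁻¹) := by
  have hv0 : (0 : ℝ) < v := lt_of_le_of_ne v.2 (by exact_mod_cast (Ne.symm hv))
  have hv' : (v : ℝ) ≠ 0 := ne_of_gt hv0
  set r : ℝ := 1 - 2 * t * v with hrdef
  have hr : 0 < r := by simp only [hrdef]; linarith
  set w : ℝ≥0 := ⟨(v : ℝ) / r, div_nonneg v.2 hr.le⟩ with hwdef
  have hwco : (w : ℝ) = (v : ℝ) / r := rfl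
  have hw : w ≠ 0 := by
    intro h
    have h2 : (w : ℝ) = 0 := by rw [h]; simp
    rw [hwco, div_eq_zero_iff] at h2
    rcases h2 with h2 | h2
    · exact hv' h2
    · linarith
  rw [gaussianReal_of_var_ne_zero _ hv,
    lintegral_withDensity_eq_lintegral_mul _ (measurable_gaussianPDF 0 v)
      (by fun_prop : Measurable fun x => ENNReal.ofReal (Real.exp (t * x ^ 2)))]
  have hpt : ∀ x, (gaussianPDF 0 v * fun x => ENNReal.ofReal (Real.exp (t * x ^ 2))) x
      = ENNReal.ofReal ((Real.sqrt r)⁻¹ * gaussianPDFReal 0 w x) := by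
    intro x
    simp only [Pi.mul_apply, gaussianPDF]
    rw [← ENNReal.ofReal_mul (gaussianPDFReal_nonneg _ _ _)]
    congr 1
    unfold gaussianPDFReal
    have hexp : Real.exp (-(x - 0) ^ 2 / (2 * v)) * Real.exp (t * x ^ 2)
        = Real.exp (-(x - 0) ^ 2 / (2 * w)) := by
      rw [← Real.exp_add]
      congr 1
      rw [hwco]
      field_simp
      ring
    have hco : (√(2 * π * v))⁻¹ = (√r)⁻¹ * (√(2 * π * w))⁻¹ := by
      rw [← mul_inv]
      congr 1
      rw [← Real.sqrt_mul hr.le, hwco]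
      congr 1
      field_simp
    calc (√(2 * π * ↑v))⁻¹ * rexp (-(x - 0) ^ 2 / (2 * ↑v)) * rexp (t * x ^ 2)
        = (√(2 * π * ↑v))⁻¹ * (rexp (-(x - 0) ^ 2 / (2 * ↑v)) * rexp (t * x ^ 2)) := by ring
      _ = ((√r)⁻¹ * (√(2 * π * ↑w))⁻¹) * rexp (-(x - 0) ^ 2 / (2 * ↑w)) := by rw [hexp, hco]
      _ = (√r)⁻¹ * ((√(2 * π * ↑w))⁻¹ * rexp (-(x - 0) ^ 2 / (2 * ↑w))) := by ring
  rw [lintegral_congr hpt]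
  simp_rw [ENNReal.ofReal_mul (inv_nonneg.mpr (Real.sqrt_nonneg r))]
  rw [lintegral_const_mul _ ((measurable_gaussianPDFReal _ _).ennreal_ofReal),
    lintegral_gaussianPDFReal_eq_one 0 hw, mul_one]

lemma iIndepFun_ae_congr {Ω ι : Type*} [MeasurableSpace Ω] [Countable ι] {μ : Measure Ω}
    {β : ι → Type*} [m : ∀ i, MeasurableSpace (β i)] {f g : ∀ i, Ω → β i}
    (h : ∀ i, f i =ᵐ[μ] g i)
    (hf : iIndepFun f μ) : iIndepFun g μ := by
  rw [iIndepFun_iff_measure_inter_preimage_eq_mul] at hf ⊢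
  intro S sets hmeas
  have hall : ∀ᵐ ω ∂μ, ∀ i, f i ω = g i ω := ae_all_iff.mpr h
  have h1 : ∀ i, μ (f i ⁻¹' sets i) = μ (g i ⁻¹' sets i) := by
    intro i
    refine measure_congr ?_
    filter_upwards [h i] with ω hω
    show (f i ω ∈ sets i) = (g i ω ∈ sets i)
    rw [hω]
  have h2 : μ (⋂ i ∈ S, f i ⁻¹' sets i) = μ (⋂ i ∈ S, g i ⁻¹' sets i) := by
    refine measure_congr ?_
    filter_upwards [hall] with ω hω
    show (ω ∈ ⋂ i ∈ S, f i ⁻¹' sets i) = (ω ∈ ⋂ i ∈ S, g i ⁻¹' sets i)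
    simp only [Set.mem_iInter, Set.mem_preimage, hω]
  rw [← h2, hf S hmeas]
  exact Finset.prod_congr rfl fun i _ => h1 i

set_option maxHeartbeats 1000000 in
theorem stmt2 {Ω : Type*} [MeasurableSpace Ω] (μ : Measure Ω) [IsProbabilityMeasure μ]
    (P X Q Y : Ω → ℝ) (s d c lam : ℝ)
    (hs : 0 < s) (hsd : s ≤ d) (hc : 1 < c) (hlam : |lam| < s) (hsc : s = c * |lam|)
    (hP : Measure.map P μ =
      ENNReal.ofReal (s / d) • Measure.dirac (1 : ℝ) +
        ENNReal.ofReal (1 - s / d) • Measure.dirac (0 : ℝ))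
    (hQ : Measure.map Q μ =
      ENNReal.ofReal (s / d) • Measure.dirac (1 : ℝ) +
        ENNReal.ofReal (1 - s / d) • Measure.dirac (0 : ℝ))
    (hX : Measure.map X μ = gaussianReal 0 (Real.toNNReal (1 / s)))
    (hY : Measure.map Y μ = gaussianReal 0 (Real.toNNReal (1 / s)))
    (hindep : iIndepFun ![P, X, Q, Y] μ) :
    ∫ ω, Real.exp (lam * (P ω * X ω * Q ω * Y ω)) ∂μ ≤
      Real.exp (c ^ 3 * lam ^ 2 / (d ^ 2 * Real.sqrt (c ^ 2 - 1))) := by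
  -- scalar facts
  have hd : 0 < d := lt_of_lt_of_le hs hsd
  have hc0 : 0 < c := lt_trans one_pos hc
  have hlam0 : lam ≠ 0 := by
    intro h
    rw [h] at hsc
    simp at hsc
    linarith
  have hs2 : s ^ 2 = c ^ 2 * lam ^ 2 := by rw [hsc, mul_pow, sq_abs]
  have hlam2 : lam ^ 2 < s ^ 2 := by nlinarith [sq_abs lam, abs_nonneg lam]
  have hp0 : 0 ≤ s / d := div_nonneg hs.le hd.le
  have hb0 : 0 ≤ 1 - s / d := by
    have := (div_le_one hd).2 hsd
    linarith
  set v : ℝ≥0 := Real.toNNReal (1 / s) with hvdef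
  have hvco : (v : ℝ) = 1 / s := Real.coe_toNNReal _ (by positivity)
  have hv : v ≠ 0 := by
    intro h
    rw [h] at hvco
    simp at hvco
    have := one_div_pos.mpr hs
    linarith [hvco]
  have hab : ENNReal.ofReal (s / d) + ENNReal.ofReal (1 - s / d) = 1 := by
    rw [← ENNReal.ofReal_add hp0 hb0]
    norm_num
  -- a.e. measurability
  have hPam : AEMeasurable P μ := by
    by_contra h
    rw [Measure.map_of_not_aemeasurable h] at hP
    have h0 := congrArg (fun m : Measure ℝ => m Set.univ) hP
    simp [Measure.smul_apply, smul_eq_mul] at h0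
    rw [hab] at h0
    norm_num at h0
  have hQam : AEMeasurable Q μ := by
    by_contra h
    rw [Measure.map_of_not_aemeasurable h] at hQ
    have h0 := congrArg (fun m : Measure ℝ => m Set.univ) hQ
    simp [Measure.smul_apply, smul_eq_mul] at h0
    rw [hab] at h0
    norm_num at h0
  have hXam : AEMeasurable X μ := by
    by_contra h
    rw [Measure.map_of_not_aemeasurable h] at hX
    have h0 := congrArg (fun m : Measure ℝ => m Set.univ) hX
    simp [measure_univ] at h0
  have hYam : AEMeasurable Y μ := by
    by_contra h
    rw [Measure.map_of_not_aemeasurable h] at hY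
    have h0 := congrArg (fun m : Measure ℝ => m Set.univ) hY
    simp [measure_univ] at h0
  obtain ⟨P', hP'm, hPe⟩ := hPam
  obtain ⟨X', hX'm, hXe⟩ := hXam
  obtain ⟨Q', hQ'm, hQe⟩ := hQam
  obtain ⟨Y', hY'm, hYe⟩ := hYam
  -- laws of primed versions
  set κ : Measure ℝ := ENNReal.ofReal (s / d) • Measure.dirac (1 : ℝ) +
      ENNReal.ofReal (1 - s / d) • Measure.dirac (0 : ℝ) with hκ
  set Gm : Measure ℝ := gaussianReal 0 v with hGm
  have hP'law : μ.map P' = κ := (Measure.map_congr hPe).symm.trans hP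
  have hQ'law : μ.map Q' = κ := (Measure.map_congr hQe).symm.trans hQ
  have hX'law : μ.map X' = Gm := (Measure.map_congr hXe).symm.trans hX
  have hY'law : μ.map Y' = Gm := (Measure.map_congr hYe).symm.trans hY
  haveI hκp : IsProbabilityMeasure κ := by
    constructor
    rw [hκ]
    simp [Measure.smul_apply, smul_eq_mul]
    exact hab
  -- independence of primed versions
  have h' : iIndepFun ![P', X', Q', Y'] μ := by
    refine iIndepFun_ae_congr (fun i => ?_) hindep
    fin_cases i
    · exact hPe
    · exact hXe
    · exact hQe
    · exact hYe
  have hm' : ∀ i, Measurable (![P', X', Q', Y'] i) := by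
    intro i
    fin_cases i
    · exact hP'm
    · exact hX'm
    · exact hQ'm
    · exact hY'm
  set U : Ω → ℝ × ℝ := fun ω => (P' ω, X' ω) with hU
  set V : Ω → ℝ × ℝ := fun ω => (Q' ω, Y' ω) with hV
  have hUm : Measurable U := hP'm.prodMk hX'm
  have hVm : Measurable V := hQ'm.prodMk hY'm
  have hUV : IndepFun U V μ :=
    h'.indepFun_prodMk_prodMk hm' 0 1 2 3 (by decide) (by decide) (by decide) (by decide)
  have hPX : IndepFun P' X' μ := h'.indepFun (show (0 : Fin 4) ≠ 1 by decide)
  have hQY : IndepFun Q' Y' μ := h'.indepFun (show (2 : Fin 4) ≠ 3 by decide)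
  have hmapU : μ.map U = κ.prod Gm := by
    rw [hU,
      (indepFun_iff_map_prod_eq_prod_map_map hP'm.aemeasurable hX'm.aemeasurable).mp hPX,
      hP'law, hX'law]
  have hmapV : μ.map V = κ.prod Gm := by
    rw [hV,
      (indepFun_iff_map_prod_eq_prod_map_map hQ'm.aemeasurable hY'm.aemeasurable).mp hQY,
      hQ'law, hY'law]
  set W : Ω → (ℝ × ℝ) × ℝ × ℝ := fun ω => (U ω, V ω) with hW
  have hWm : Measurable W := hUm.prodMk hVm
  have hmapW : μ.map W = (κ.prod Gm).prod (κ.prod Gm) := by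
    rw [hW, (indepFun_iff_map_prod_eq_prod_map_map hUm.aemeasurable hVm.aemeasurable).mp hUV,
      hmapU, hmapV]
  set F : (ℝ × ℝ) × ℝ × ℝ → ℝ≥0∞ :=
    fun z => ENNReal.ofReal (Real.exp (lam * (z.1.1 * z.1.2 * z.2.1 * z.2.2))) with hF
  have hFm : Measurable F := by simp only [hF]; fun_prop
  -- key Gaussian quantities
  have ht2 : 2 * (lam ^ 2 * (v : ℝ) / 2) * (v : ℝ) < 1 := by
    rw [hvco]
    have he : 2 * (lam ^ 2 * (1 / s) / 2) * (1 / s) = lam ^ 2 / s ^ 2 := by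
      field_simp
    rw [he]
    exact (div_lt_one (by positivity)).mpr hlam2
  -- inner integral
  have hinner : ∀ pp xx : ℝ, (∫⁻ z : ℝ × ℝ, F ((pp, xx), z) ∂(κ.prod Gm))
      = ENNReal.ofReal (s / d) * ENNReal.ofReal (Real.exp ((lam * pp * xx) ^ 2 * (v : ℝ) / 2))
        + ENNReal.ofReal (1 - s / d) := by
    intro pp xx
    have hy : ∀ q : ℝ, (∫⁻ y, F ((pp, xx), (q, y)) ∂Gm)
        = ENNReal.ofReal (Real.exp ((lam * pp * xx * q) ^ 2 * (v : ℝ) / 2)) := by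
      intro q
      have harg : ∀ y : ℝ, F ((pp, xx), (q, y))
          = ENNReal.ofReal (Real.exp ((lam * pp * xx * q) * y)) := by
        intro y
        simp only [hF]
        ring_nf
      rw [lintegral_congr harg, hGm]
      exact gauss_lin hv _
    rw [lintegral_prod _ (by simp only [hF]; fun_prop), lintegral_congr fun q => hy q, hκ,
      lintegral_add_measure, lintegral_smul_measure, lintegral_smul_measure,
      lintegral_dirac' _ (by fun_prop), lintegral_dirac' _ (by fun_prop)]
    norm_num [Real.exp_zero]
  -- outer integral
  have hgmeas : Measurable fun z : ℝ × ℝ => ENNReal.ofReal (s / d) *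
      ENNReal.ofReal (Real.exp ((lam * z.1 * z.2) ^ 2 * (v : ℝ) / 2))
        + ENNReal.ofReal (1 - s / d) := by fun_prop
  have hx1 : (∫⁻ x : ℝ, (ENNReal.ofReal (s / d) *
        ENNReal.ofReal (Real.exp ((lam * 1 * x) ^ 2 * (v : ℝ) / 2))
        + ENNReal.ofReal (1 - s / d)) ∂Gm)
      = ENNReal.ofReal (s / d) *
          ENNReal.ofReal ((Real.sqrt (1 - 2 * (lam ^ 2 * (v : ℝ) / 2) * (v : ℝ)))⁻¹)
        + ENNReal.ofReal (1 - s / d) := by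
    have h1 : ∀ x : ℝ, (lam * 1 * x) ^ 2 * (v : ℝ) / 2 = (lam ^ 2 * (v : ℝ) / 2) * x ^ 2 :=
      fun x => by ring
    simp_rw [h1]
    rw [lintegral_add_right _ measurable_const, lintegral_const_mul _ (by fun_prop), hGm,
      gauss_sq hv ht2, lintegral_const, measure_univ, mul_one]
  have hx0 : (∫⁻ x : ℝ, (ENNReal.ofReal (s / d) *
        ENNReal.ofReal (Real.exp ((lam * 0 * x) ^ 2 * (v : ℝ) / 2))
        + ENNReal.ofReal (1 - s / d)) ∂Gm)
      = 1 := by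
    norm_num [Real.exp_zero, lintegral_const, measure_univ, hab]
  have houter : (∫⁻ u : ℝ × ℝ, (ENNReal.ofReal (s / d) *
        ENNReal.ofReal (Real.exp ((lam * u.1 * u.2) ^ 2 * (v : ℝ) / 2))
        + ENNReal.ofReal (1 - s / d)) ∂(κ.prod Gm))
      = ENNReal.ofReal (s / d) * (ENNReal.ofReal (s / d) *
          ENNReal.ofReal ((Real.sqrt (1 - 2 * (lam ^ 2 * (v : ℝ) / 2) * (v : ℝ)))⁻¹)
          + ENNReal.ofReal (1 - s / d))
        + ENNReal.ofReal (1 - s / d) := by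
    have hgm2 : Measurable fun p : ℝ => ∫⁻ x : ℝ, (ENNReal.ofReal (s / d) *
        ENNReal.ofReal (Real.exp ((lam * p * x) ^ 2 * (v : ℝ) / 2))
        + ENNReal.ofReal (1 - s / d)) ∂Gm := hgmeas.lintegral_prod_right'
    rw [lintegral_prod _ hgmeas.aemeasurable, hκ, lintegral_add_measure,
      lintegral_smul_measure, lintegral_smul_measure,
      lintegral_dirac' _ hgm2, lintegral_dirac' _ hgm2, hx1, hx0, smul_eq_mul, smul_eq_mul, mul_one]
  -- rewrite the goal integral
  have hgoal : ∫ ω, Real.exp (lam * (P ω * X ω * Q ω * Y ω)) ∂μ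
      = ∫ ω, Real.exp (lam * (P' ω * X' ω * Q' ω * Y' ω)) ∂μ := by
    refine integral_congr_ae ?_
    filter_upwards [hPe, hXe, hQe, hYe] with ω h1 h2 h3 h4
    rw [h1, h2, h3, h4]
  rw [hgoal]
  have hmeas' : Measurable fun ω => Real.exp (lam * (P' ω * X' ω * Q' ω * Y' ω)) :=
    (measurable_const.mul (((hP'm.mul hX'm).mul hQ'm).mul hY'm)).exp
  rw [integral_eq_lintegral_of_nonneg_ae
    (Filter.Eventually.of_forall fun ω => (Real.exp_pos _).le) hmeas'.aestronglyMeasurable]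
  -- compute the lintegral
  have hcompute : (∫⁻ ω, ENNReal.ofReal (Real.exp (lam * (P' ω * X' ω * Q' ω * Y' ω))) ∂μ)
      = ENNReal.ofReal (s / d) * (ENNReal.ofReal (s / d) *
          ENNReal.ofReal ((Real.sqrt (1 - 2 * (lam ^ 2 * (v : ℝ) / 2) * (v : ℝ)))⁻¹)
          + ENNReal.ofReal (1 - s / d))
        + ENNReal.ofReal (1 - s / d) := by
    calc (∫⁻ ω, ENNReal.ofReal (Real.exp (lam * (P' ω * X' ω * Q' ω * Y' ω))) ∂μ)
        = ∫⁻ z, F z ∂(μ.map W) := (lintegral_map hFm hWm).symm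
      _ = ∫⁻ z, F z ∂((κ.prod Gm).prod (κ.prod Gm)) := by rw [hmapW]
      _ = ∫⁻ u, ∫⁻ z, F (u, z) ∂(κ.prod Gm) ∂(κ.prod Gm) :=
          lintegral_prod _ hFm.aemeasurable
      _ = ∫⁻ u : ℝ × ℝ, (ENNReal.ofReal (s / d) *
            ENNReal.ofReal (Real.exp ((lam * u.1 * u.2) ^ 2 * (v : ℝ) / 2))
            + ENNReal.ofReal (1 - s / d)) ∂(κ.prod Gm) :=
          lintegral_congr fun u => hinner u.1 u.2
      _ = _ := houter
  rw [hcompute]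
  -- convert to a real statement
  set KK : ℝ := (Real.sqrt (1 - 2 * (lam ^ 2 * (v : ℝ) / 2) * (v : ℝ)))⁻¹ with hKK
  have hKK0 : 0 ≤ KK := inv_nonneg.mpr (Real.sqrt_nonneg _)
  have hsqpos : 0 < Real.sqrt (c ^ 2 - 1) := Real.sqrt_pos.mpr (by nlinarith)
  have hKKval : KK = c / Real.sqrt (c ^ 2 - 1) := by
    rw [hKK]
    have h1 : 1 - 2 * (lam ^ 2 * (v : ℝ) / 2) * (v : ℝ) = (c ^ 2 - 1) / c ^ 2 := by
      rw [hvco]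
      have hls : lam ^ 2 = s ^ 2 / c ^ 2 := by rw [hs2]; field_simp
      rw [hls]
      field_simp
    rw [h1, Real.sqrt_div (by nlinarith : (0:ℝ) ≤ c ^ 2 - 1), Real.sqrt_sq hc0.le, inv_div]
  have hKc0 : 0 ≤ c / Real.sqrt (c ^ 2 - 1) := div_nonneg hc0.le hsqpos.le
  rw [hKKval]
  have hn1 : 0 ≤ s / d * (c / Real.sqrt (c ^ 2 - 1)) := mul_nonneg hp0 hKc0
  have hn2 : 0 ≤ s / d * (c / Real.sqrt (c ^ 2 - 1)) + (1 - s / d) := add_nonneg hn1 hb0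
  have hn3 : 0 ≤ s / d * (s / d * (c / Real.sqrt (c ^ 2 - 1)) + (1 - s / d)) :=
    mul_nonneg hp0 hn2
  rw [← ENNReal.ofReal_mul hp0, ← ENNReal.ofReal_add hn1 hb0, ← ENNReal.ofReal_mul hp0,
    ← ENNReal.ofReal_add hn3 hb0, ENNReal.toReal_ofReal (add_nonneg hn3 hb0)]
  calc s / d * (s / d * (c / Real.sqrt (c ^ 2 - 1)) + (1 - s / d)) + (1 - s / d)
      = 1 + (s / d) ^ 2 * (c / Real.sqrt (c ^ 2 - 1) - 1) := by ring
    _ ≤ Real.exp ((s / d) ^ 2 * (c / Real.sqrt (c ^ 2 - 1) - 1)) := by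
        have := Real.add_one_le_exp ((s / d) ^ 2 * (c / Real.sqrt (c ^ 2 - 1) - 1))
        linarith
    _ ≤ Real.exp (c ^ 3 * lam ^ 2 / (d ^ 2 * Real.sqrt (c ^ 2 - 1))) := by
        apply Real.exp_le_exp.mpr
        have h2 : (s / d) ^ 2 * (c / Real.sqrt (c ^ 2 - 1))
            = c ^ 3 * lam ^ 2 / (d ^ 2 * Real.sqrt (c ^ 2 - 1)) := by
          rw [div_pow, hs2]
          field_simp
        have h3 : (s / d) ^ 2 * (c / Real.sqrt (c ^ 2 - 1) - 1)
            = (s / d) ^ 2 * (c / Real.sqrt (c ^ 2 - 1)) - (s / d) ^ 2 := by ring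
        have h4 : 0 ≤ (s / d) ^ 2 := sq_nonneg _
        linarith
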